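/- Let G be a finite graph, w nonnegative edge weights, and T_1,...,T_q ⊆ V candidate sets. For each i, let C_i be a minimum-weight edge set separating some vertex t_i ∈ T_i from ⋃_{j≠i} T_j, chosen so that w(C_i) is minimal over all choices of t_i ∈ T_i. Then w(⋃_{i=1}^q C_i) is at most twice the optimum of the Single-to-All problem, i.e., twice the minimum over choices of representatives t_i* ∈ T_i and edge sets C separating each t_i* from all of T_j (j ≠ i) of w(C). -/

import Mathlib

open scoped Classical

/-- The union of cheapest isolating cuts (one per candidate set, over the best
choice of representative) is a 2-approximation for Single-to-All. -/
theorem stmt1 {V : Type*} [Fintype V] [DecidableEq V] (G : SimpleGraph V)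
    (w : Sym2 V → ℝ) (hw : ∀ e, 0 ≤ w e)
    (q : ℕ) (T : Fin q → Set V)
    (t : Fin q → V) (C : Fin q → Finset (Sym2 V))
    (ht : ∀ i, t i ∈ T i)
    (hCsub : ∀ i, ↑(C i) ⊆ G.edgeSet)
    (hsep : ∀ i j, j ≠ i → ∀ v ∈ T j, ¬ (G.deleteEdges ↑(C i)).Reachable (t i) v)
    (hmin : ∀ i, ∀ t' ∈ T i, ∀ C' : Finset (Sym2 V), ↑C' ⊆ G.edgeSet →
      (∀ j, j ≠ i → ∀ v ∈ T j, ¬ (G.deleteEdges (↑C' : Set (Sym2 V))).Reachable t' v) →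
      ∑ e ∈ C i, w e ≤ ∑ e ∈ C', w e)
    -- any feasible Single-to-All solution (t*, C*)
    (tstar : Fin q → V) (Cstar : Finset (Sym2 V))
    (htstar : ∀ i, tstar i ∈ T i) (hCstar : ↑Cstar ⊆ G.edgeSet)
    (hsepstar : ∀ i j, i ≠ j → ∀ v ∈ T j,
      ¬ (G.deleteEdges ↑Cstar).Reachable (tstar i) v) :
    ∑ e ∈ Finset.univ.biUnion C, w e ≤ 2 * ∑ e ∈ Cstar, w e := by
  classical
  set R := G.deleteEdges (↑Cstar : Set (Sym2 V)) with hR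
  set C' : Fin q → Finset (Sym2 V) :=
    fun i => Cstar.filter (fun e => ∃ v ∈ e, R.Reachable (tstar i) v) with hC'
  -- the restricted cuts are feasible
  have hsub : ∀ i, C' i ⊆ Cstar := fun i => Finset.filter_subset _ _
  have key : ∀ i a v, R.Reachable (tstar i) a →
      (G.deleteEdges (↑(C' i) : Set (Sym2 V))).Reachable a v → R.Reachable (tstar i) v := by
    intro i a v ha hr
    obtain ⟨p⟩ := hr
    induction p with
    | nil => exact ha
    | cons h p ih =>
      rename_i x y z
      apply ih
      rw [SimpleGraph.deleteEdges_adj] at h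
      obtain ⟨hxy, hne⟩ := h
      have hnot : s(x, y) ∉ Cstar := by
        intro hmem
        apply hne
        have hmem' : s(x, y) ∈ C' i := Finset.mem_filter.mpr ⟨hmem, ⟨x, by simp, ha⟩⟩
        simpa using hmem'
      exact ha.trans (SimpleGraph.Adj.reachable (by
        rw [hR, SimpleGraph.deleteEdges_adj]; exact ⟨hxy, by simpa using hnot⟩))
  have hfeas : ∀ i, ∑ e ∈ C i, w e ≤ ∑ e ∈ C' i, w e := by
    intro i
    refine hmin i (tstar i) (htstar i) (C' i)
      (fun e he => hCstar (hsub i he)) ?_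
    intro j hj v hv hreach
    exact hsepstar i j (fun h => hj h.symm) v hv
      (key i (tstar i) v (SimpleGraph.Reachable.refl _) hreach)
  -- counting: each edge of Cstar lies in at most 2 of the C' i
  have hcount : ∀ e ∈ Cstar,
      ((Finset.univ : Finset (Fin q)).filter (fun i => e ∈ C' i)).card ≤ 2 := by
    intro e he
    induction e with
    | h a b =>
      have hone : ∀ x : V,
          ((Finset.univ : Finset (Fin q)).filter
            (fun i => R.Reachable (tstar i) x)).card ≤ 1 := by
        intro x
        rw [Finset.card_le_one]
        intro i hi j hj
        simp only [Finset.mem_filter] at hi hj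
        by_contra hne
        exact hsepstar i j hne (tstar j) (htstar j)
          (hi.2.trans hj.2.symm)
      calc ((Finset.univ : Finset (Fin q)).filter (fun i => s(a,b) ∈ C' i)).card
          ≤ (((Finset.univ : Finset (Fin q)).filter (fun i => R.Reachable (tstar i) a)) ∪
             ((Finset.univ : Finset (Fin q)).filter (fun i => R.Reachable (tstar i) b))).card := by
            apply Finset.card_le_card
            intro i hi
            simp only [Finset.mem_filter, hC', Sym2.mem_iff] at hi
            obtain ⟨-, -, v, hv, hr⟩ := hi
            rcases hv with rfl | rfl
            · exact Finset.mem_union_left _ (Finset.mem_filter.mpr ⟨Finset.mem_univ _, hr⟩)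
            · exact Finset.mem_union_right _ (Finset.mem_filter.mpr ⟨Finset.mem_univ _, hr⟩)
        _ ≤ _ + _ := Finset.card_union_le _ _
        _ ≤ 1 + 1 := add_le_add (hone a) (hone b)
        _ = 2 := rfl
  -- sum over the union ≤ sum of sums
  have h1 : ∑ e ∈ Finset.univ.biUnion C, w e ≤ ∑ i, ∑ e ∈ C i, w e := by
    classical
    induction (Finset.univ : Finset (Fin q)) using Finset.induction with
    | empty => simp
    | insert a s hnot ih =>
      rw [Finset.biUnion_insert, Finset.sum_insert hnot]
      calc ∑ e ∈ C a ∪ s.biUnion C, w e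
          ≤ ∑ e ∈ C a, w e + ∑ e ∈ s.biUnion C, w e := by
            rw [← Finset.sum_union_inter]
            have := Finset.sum_nonneg (fun e (_ : e ∈ C a ∩ s.biUnion C) => hw e)
            linarith
        _ ≤ _ := by linarith
  -- swap and bound
  have h2 : ∑ i, ∑ e ∈ C' i, w e ≤ 2 * ∑ e ∈ Cstar, w e := by
    have : ∑ i, ∑ e ∈ C' i, w e
        = ∑ e ∈ Cstar, (((Finset.univ : Finset (Fin q)).filter
            (fun i => e ∈ C' i)).card : ℝ) * w e := by
      have : ∀ i, ∑ e ∈ C' i, w e = ∑ e ∈ Cstar, if e ∈ C' i then w e else 0 := by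
        intro i
        rw [Finset.sum_ite_mem, Finset.inter_eq_right.mpr (hsub i)]
      rw [Finset.sum_congr rfl (fun i _ => this i), Finset.sum_comm]
      refine Finset.sum_congr rfl (fun e he => ?_)
      simp [Finset.sum_ite, Finset.sum_const, nsmul_eq_mul]
    rw [this, Finset.mul_sum]
    refine Finset.sum_le_sum (fun e he => ?_)
    refine mul_le_mul_of_nonneg_right ?_ (hw e)
    exact_mod_cast hcount e he
  calc ∑ e ∈ Finset.univ.biUnion C, w e ≤ ∑ i, ∑ e ∈ C i, w e := h1
    _ ≤ ∑ i, ∑ e ∈ C' i, w e := Finset.sum_le_sum (fun i _ => hfeas i)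
    _ ≤ 2 * ∑ e ∈ Cstar, w e := h2
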